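/- Let 1 < p < ∞ and q with 1/p + 1/q = 1, let N ≥ 1, 𝒩 = {1,...,N}, and suppose h : ℝ^𝒩 → ℝ is the pointwise limit of the functions x ↦ ‖x − y^n‖_p − ‖y^n‖_p for some sequence (y^n) in ℝ^𝒩 with ‖y^n‖_p → ∞. Then there exists μ ∈ ℝ^𝒩 with ‖μ‖_q = 1 such that h(x) = −Σ_{i∈𝒩} μ_i x_i for all x ∈ ℝ^𝒩. -/

import Mathlib

open Filter Topology

section aux
variable (p : ℝ) {N : ℕ}

noncomputable def gF (p : ℝ) {N : ℕ} (w : Fin N → ℝ) : ℝ := ∑ i, |w i| ^ p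
noncomputable def FF (p : ℝ) {N : ℕ} (w : Fin N → ℝ) : ℝ := (gF p w) ^ (1/p)

lemma gF_nonneg (w : Fin N → ℝ) : 0 ≤ gF p w :=
  Finset.sum_nonneg fun i _ => Real.rpow_nonneg (abs_nonneg _) p

lemma FF_pow (hp0 : 0 < p) (w : Fin N → ℝ) : (FF p w) ^ p = gF p w := by
  rw [FF, ← Real.rpow_mul (gF_nonneg p w), one_div, inv_mul_cancel₀ hp0.ne', Real.rpow_one]

lemma gF_even (w x : Fin N → ℝ) : gF p (x - w) = gF p (w - x) := by
  unfold gF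
  refine Finset.sum_congr rfl fun i _ => ?_
  rw [Pi.sub_apply, Pi.sub_apply, abs_sub_comm]

lemma FF_even (w x : Fin N → ℝ) : FF p (x - w) = FF p (w - x) := by
  rw [FF, FF, gF_even]

lemma FF_smul {c : ℝ} (hc : 0 ≤ c) (hp0 : 0 < p) (w : Fin N → ℝ) :
    FF p (c • w) = c * FF p w := by
  have hg : gF p (c • w) = c ^ p * gF p w := by
    unfold gF
    rw [Finset.mul_sum]
    refine Finset.sum_congr rfl fun i _ => ?_
    rw [Pi.smul_apply, smul_eq_mul, abs_mul, Real.mul_rpow (abs_nonneg _) (abs_nonneg _),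
      abs_of_nonneg hc]
  rw [FF, hg, Real.mul_rpow (Real.rpow_nonneg hc _) (gF_nonneg p w), ← Real.rpow_mul hc,
    mul_one_div_cancel hp0.ne', Real.rpow_one, FF]
end aux

section calc1

lemma phi_deriv (p : ℝ) (hp : 1 < p) (t : ℝ) :
    HasDerivAt (fun t : ℝ => |t| ^ p) (p * (SignType.sign t : ℝ) * |t| ^ (p - 1)) t := by
  rcases eq_or_ne t 0 with rfl | ht
  · simp only [sign_zero, SignType.coe_zero, mul_zero, zero_mul]
    rw [hasDerivAt_iff_tendsto_slope]
    have : Tendsto (fun s : ℝ => |s| ^ (p - 1)) (𝓝[≠] (0:ℝ)) (𝓝 0) := by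
      have hc : ContinuousAt (fun a : ℝ => a ^ (p - 1)) (|(0:ℝ)|) := by
        simpa using Real.continuousAt_rpow_const 0 (p - 1) (Or.inr (by linarith))
      have : Tendsto (fun s : ℝ => |s| ^ (p - 1)) (𝓝 (0:ℝ)) (𝓝 (|(0:ℝ)| ^ (p-1))) :=
        hc.comp continuous_abs.continuousAt
      simpa [Real.zero_rpow (by linarith : p - 1 ≠ 0)] using this.mono_left nhdsWithin_le_nhds
    apply squeeze_zero_norm _ this
    intro s
    rcases eq_or_ne s 0 with rfl | hs
    · simp [slope, Real.zero_rpow (by linarith : p ≠ 0), Real.rpow_nonneg]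
    · have h1 : slope (fun t : ℝ => |t| ^ p) 0 s = |s| ^ p / s := by
        simp [slope, Real.zero_rpow (by linarith : p ≠ 0), inv_mul_eq_div]
      rw [h1, Real.norm_eq_abs, abs_div, abs_of_nonneg (Real.rpow_nonneg (abs_nonneg s) p),
        Real.rpow_sub (abs_pos.2 hs), Real.rpow_one]
  · have h1 : HasDerivAt (fun t : ℝ => |t|) ((SignType.sign t : ℝ)) t := hasDerivAt_abs ht
    have h2 : HasDerivAt (fun a : ℝ => a ^ p) (p * |t| ^ (p - 1)) |t| :=
      Real.hasDerivAt_rpow_const (Or.inl (abs_ne_zero.2 ht))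
    have := h2.comp t h1
    exact this.congr_deriv (by ring)

lemma phi_contDiff (p : ℝ) (hp : 1 < p) : ContDiff ℝ 1 (fun t : ℝ => |t| ^ p) := by
  rw [contDiff_one_iff_deriv]
  have hderiv : deriv (fun t : ℝ => |t| ^ p)
      = fun t => p * (SignType.sign t : ℝ) * |t| ^ (p - 1) := by
    funext t; exact (phi_deriv p hp t).deriv
  refine ⟨fun t => (phi_deriv p hp t).differentiableAt, ?_⟩
  rw [hderiv]
  rw [continuous_iff_continuousAt]
  intro t
  rcases lt_trichotomy t 0 with ht | rfl | ht
  · have hev : (fun s : ℝ => p * (SignType.sign s : ℝ) * |s| ^ (p - 1))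
        =ᶠ[𝓝 t] (fun s => p * (-1) * (-s) ^ (p - 1)) := by
      filter_upwards [eventually_lt_nhds ht] with s hs
      simp [sign_neg hs, abs_of_neg hs]
    have hcc : ContinuousAt (fun s : ℝ => (-s) ^ (p-1)) t :=
      (Real.continuousAt_rpow_const (-t) (p-1) (Or.inl (by linarith))).comp (continuous_neg.continuousAt)
    exact (continuousAt_const.mul hcc).congr hev.symm
  · have : Tendsto (fun s : ℝ => p * (SignType.sign s : ℝ) * |s| ^ (p - 1)) (𝓝 0) (𝓝 0) := by
      apply squeeze_zero_norm (a := fun s : ℝ => p * |s| ^ (p-1))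
      · intro s
        rw [Real.norm_eq_abs, abs_mul, abs_mul, abs_of_nonneg (Real.rpow_nonneg (abs_nonneg s) _),
          abs_of_pos (by linarith : (0:ℝ) < p)]
        rcases eq_or_ne s 0 with rfl | hs
        · simp [Real.zero_rpow (by linarith : p - 1 ≠ 0)]
        · have : |(SignType.sign s : ℝ)| = 1 := by
            rcases lt_or_gt_of_ne hs with h | h <;> simp [sign_neg, sign_pos, h]
          rw [this, mul_one]
      · have hc : ContinuousAt (fun a : ℝ => a ^ (p - 1)) (|(0:ℝ)|) := by
          simpa using Real.continuousAt_rpow_const 0 (p - 1) (Or.inr (by linarith))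
        have h2 : Tendsto (fun s : ℝ => |s| ^ (p - 1)) (𝓝 (0:ℝ)) (𝓝 (|(0:ℝ)| ^ (p-1))) :=
          hc.comp continuous_abs.continuousAt
        have := h2.const_mul p
        simpa [Real.zero_rpow (by linarith : p - 1 ≠ 0)] using this
    unfold ContinuousAt
    simpa using this
  · have hev : (fun s : ℝ => p * (SignType.sign s : ℝ) * |s| ^ (p - 1))
        =ᶠ[𝓝 t] (fun s => p * 1 * s ^ (p - 1)) := by
      filter_upwards [eventually_gt_nhds ht] with s hs
      simp [sign_pos hs, abs_of_pos hs]
    exact (continuousAt_const.mul (Real.continuousAt_rpow_const t (p-1)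
      (Or.inl (by linarith)))).congr hev.symm

lemma gF_contDiff (p : ℝ) (hp : 1 < p) {N : ℕ} : ContDiff ℝ 1 (gF p (N := N)) := by
  unfold gF
  exact ContDiff.sum fun i _ =>
    (phi_contDiff p hp).comp (contDiff_apply ℝ ℝ i)

lemma gF_hasFDerivAt (p : ℝ) (hp : 1 < p) {N : ℕ} (v : Fin N → ℝ) :
    HasFDerivAt (gF p (N := N))
      (∑ i, (p * (SignType.sign (v i) : ℝ) * |v i| ^ (p - 1)) •
        (ContinuousLinearMap.proj i : (Fin N → ℝ) →L[ℝ] ℝ)) v := by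
  unfold gF
  refine HasFDerivAt.fun_sum fun i _ => ?_
  have hproj : HasFDerivAt (fun w : Fin N → ℝ => w i)
      (ContinuousLinearMap.proj i : (Fin N → ℝ) →L[ℝ] ℝ) v :=
    (ContinuousLinearMap.proj i : (Fin N → ℝ) →L[ℝ] ℝ).hasFDerivAt
  exact (phi_deriv p hp (v i)).comp_hasFDerivAt v hproj

end calc1

/-- every pointwise limit of `τ_p(yⁿ)` with `‖yⁿ‖_p → ∞` is
`x ↦ -∑ μ_i x_i` with `‖μ‖_q = 1`. -/
theorem lp_horofunction_form (p q : ℝ) (hp : 1 < p) (hpq : 1/p + 1/q = 1)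
    (N : ℕ) (hN : 1 ≤ N) (h : (Fin N → ℝ) → ℝ) (y : ℕ → Fin N → ℝ)
    (hy : Tendsto (fun n => (∑ i, |y n i| ^ p) ^ (1/p)) atTop atTop)
    (hlim : ∀ x : Fin N → ℝ,
      Tendsto (fun n =>
          (∑ i, |x i - y n i| ^ p) ^ (1/p) - (∑ i, |y n i| ^ p) ^ (1/p))
        atTop (𝓝 (h x))) :
    ∃ μ : Fin N → ℝ, (∑ i, |μ i| ^ q) ^ (1/q) = 1 ∧
      ∀ x : Fin N → ℝ, h x = -∑ i, μ i * x i := by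
  have hp0 : (0:ℝ) < p := by linarith
  -- facts about q
  have hq0 : 0 < q := by
    rcases lt_trichotomy q 0 with hq | rfl | hq
    · have h1 : 1/q < 0 := by exact div_neg_of_pos_of_neg one_pos hq
      have h2 : 1/p < 1 := by rw [div_lt_one hp0]; exact hp
      linarith
    · exfalso
      rw [div_zero, add_zero, div_eq_one_iff_eq hp0.ne'] at hpq
      linarith
    · exact hq
  have hpq1 : (p - 1) * q = p := by
    field_simp at hpq
    nlinarith
  -- reformulate hy, hlim
  have hy' : Tendsto (fun n => FF p (y n)) atTop atTop := hy
  have hlim' : ∀ x : Fin N → ℝ,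
      Tendsto (fun n => FF p (x - y n) - FF p (y n)) atTop (𝓝 (h x)) := by
    intro x
    have := hlim x
    simpa [FF, gF] using this
  -- the normalized sequence
  set v : ℕ → Fin N → ℝ := fun n => if 1 ≤ FF p (y n) then (FF p (y n))⁻¹ • y n else 0
    with hv_def
  have hvF : ∀ n, 1 ≤ FF p (y n) → FF p (v n) = 1 := by
    intro n hn
    have ht0 : (0:ℝ) < FF p (y n) := lt_of_lt_of_le one_pos hn
    rw [hv_def]
    simp only [if_pos hn]
    rw [FF_smul p (inv_nonneg.2 ht0.le) hp0, inv_mul_cancel₀ ht0.ne']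
  have hvball : ∀ n, v n ∈ Metric.closedBall (0 : Fin N → ℝ) 1 := by
    intro n
    rw [Metric.mem_closedBall, dist_zero_right]
    rw [pi_norm_le_iff_of_nonneg zero_le_one]
    intro i
    by_cases hn : 1 ≤ FF p (y n)
    · have h1 : |v n i| ^ p ≤ gF p (v n) := by
        unfold gF
        exact Finset.single_le_sum (fun j _ => Real.rpow_nonneg (abs_nonneg _) p)
          (Finset.mem_univ i)
      rw [← FF_pow p hp0 (v n), hvF n hn, Real.one_rpow] at h1
      rw [Real.norm_eq_abs]
      by_contra hc
      push_neg at hc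
      have := Real.rpow_lt_rpow zero_le_one hc hp0
      rw [Real.one_rpow] at this
      linarith
    · simp only [hv_def, if_neg hn]
      simp
  -- extract convergent subsequence
  obtain ⟨w, hwball, φ, hφmono, hφtend⟩ :=
    (isCompact_closedBall (0 : Fin N → ℝ) 1).tendsto_subseq hvball
  have htφ : Tendsto (fun k => FF p (y (φ k))) atTop atTop :=
    hy'.comp hφmono.tendsto_atTop
  have hev1 : ∀ᶠ k in atTop, 1 ≤ FF p (y (φ k)) := htφ.eventually_ge_atTop 1
  -- g w = 1
  have hgw : gF p w = 1 := by
    have h1 : Tendsto (fun k => gF p (v (φ k))) atTop (𝓝 (gF p w)) :=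
      ((gF_contDiff p hp).continuous.tendsto w).comp hφtend
    have h2 : (fun k => gF p (v (φ k))) =ᶠ[atTop] (fun _ => (1:ℝ)) := by
      filter_upwards [hev1] with k hk
      rw [← FF_pow p hp0 (v (φ k)), hvF _ hk, Real.one_rpow]
    exact tendsto_nhds_unique (h1.congr' h2) tendsto_const_nhds
  -- derivative of F at w
  set D : (Fin N → ℝ) →L[ℝ] ℝ :=
    ∑ i, (p * (SignType.sign (w i) : ℝ) * |w i| ^ (p - 1)) •
      (ContinuousLinearMap.proj i : (Fin N → ℝ) →L[ℝ] ℝ) with hD_def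
  have hDg : HasFDerivAt (gF p (N := N)) D w := gF_hasFDerivAt p hp w
  have houter : HasDerivAt (fun a : ℝ => a ^ (1/p))
      ((1/p) * (gF p w) ^ (1/p - 1)) (gF p w) :=
    Real.hasDerivAt_rpow_const (Or.inl (by rw [hgw]; exact one_ne_zero))
  have hFD : HasFDerivAt (FF p (N := N)) (((1/p) * (gF p w) ^ (1/p - 1)) • D) w :=
    houter.comp_hasFDerivAt w hDg
  have hcoef : (1/p) * (gF p w) ^ (1/p - 1) = 1/p := by
    rw [hgw, Real.one_rpow, mul_one]
  rw [hcoef] at hFD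
  set L : (Fin N → ℝ) →L[ℝ] ℝ := (1/p : ℝ) • D with hL_def
  -- strict derivative
  have hCD : ContDiffAt ℝ 1 (FF p (N := N)) w := by
    have houterC : ContDiffAt ℝ 1 (fun a : ℝ => a ^ (1/p)) (gF p w) :=
      Real.contDiffAt_rpow_const_of_ne (by rw [hgw]; exact one_ne_zero)
    exact houterC.comp w (gF_contDiff p hp).contDiffAt
  have hstrict : HasStrictFDerivAt (FF p (N := N)) L w := by
    have := hCD.hasStrictFDerivAt one_ne_zero
    rwa [hFD.fderiv] at this
  -- the candidate μ
  set μ : Fin N → ℝ := fun i => (SignType.sign (w i) : ℝ) * |w i| ^ (p - 1) with hμ_def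
  have hLx : ∀ x : Fin N → ℝ, L x = ∑ i, μ i * x i := by
    intro x
    rw [hL_def, hD_def]
    simp only [ContinuousLinearMap.smul_apply, ContinuousLinearMap.sum_apply,
      ContinuousLinearMap.smul_apply, ContinuousLinearMap.proj_apply, smul_eq_mul,
      Finset.mul_sum]
    refine Finset.sum_congr rfl fun i _ => ?_
    rw [hμ_def]
    field_simp
  refine ⟨μ, ?_, ?_⟩
  · -- norm of μ
    have hsum : ∑ i, |μ i| ^ q = 1 := by
      rw [← hgw]
      refine Finset.sum_congr rfl fun i _ => ?_
      rw [hμ_def]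
      rcases eq_or_ne (w i) 0 with h0 | h0
      · simp [h0, Real.zero_rpow hq0.ne', Real.zero_rpow hp0.ne',
          Real.zero_rpow (by linarith : p - 1 ≠ 0)]
      · have hs : |(SignType.sign (w i) : ℝ)| = 1 := by
          rcases lt_or_gt_of_ne h0 with hh | hh <;> simp [sign_neg, sign_pos, hh]
        rw [abs_mul, hs, one_mul, abs_of_nonneg (Real.rpow_nonneg (abs_nonneg _) _),
          ← Real.rpow_mul (abs_nonneg _), hpq1]
    rw [hsum, Real.one_rpow]
  · -- the limit identity
    intro x
    -- key algebraic identity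
    have key : ∀ n, 1 ≤ FF p (y n) →
        FF p (x - y n) - FF p (y n)
          = (FF p (v n - (FF p (y n))⁻¹ • x) - FF p (v n)) / (FF p (y n))⁻¹ := by
      intro n hn
      have ht0 : (0:ℝ) < FF p (y n) := lt_of_lt_of_le one_pos hn
      have hvn : v n = (FF p (y n))⁻¹ • y n := by rw [hv_def]; simp [if_pos hn]
      have h1 : y n - x = (FF p (y n)) • (v n - (FF p (y n))⁻¹ • x) := by
        rw [hvn, smul_sub, smul_smul, smul_smul, mul_inv_cancel₀ ht0.ne', one_smul, one_smul]
      rw [FF_even, h1, FF_smul p ht0.le hp0, hvF n hn]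
      field_simp
    -- little-o argument along the subsequence
    set s : ℕ → ℝ := fun k => (FF p (y (φ k)))⁻¹ with hs_def
    have hs0 : Tendsto s atTop (𝓝 0) := htφ.inv_tendsto_atTop
    set b : ℕ → Fin N → ℝ := fun k => v (φ k) - s k • x with hb_def
    set a : ℕ → Fin N → ℝ := fun k => v (φ k) with ha_def
    have hbtend : Tendsto b atTop (𝓝 w) := by
      have h2 : Tendsto (fun k => s k • x) atTop (𝓝 ((0:ℝ) • x)) := hs0.smul_const x
      rw [zero_smul] at h2
      have := hφtend.sub h2
      rwa [sub_zero] at this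
    have hpair : Tendsto (fun k => (b k, a k)) atTop (𝓝 (w, w)) :=
      hbtend.prodMk_nhds hφtend
    have hlo : (fun k => FF p (b k) - FF p (a k) - L (b k - a k)) =o[atTop]
        (fun k => b k - a k) := by
      have := hstrict.isLittleO.comp_tendsto hpair
      simpa [Function.comp_def] using this
    have hBO : (fun k => b k - a k) =O[atTop] s := by
      apply Asymptotics.IsBigO.of_bound ‖x‖
      filter_upwards with k
      have : b k - a k = (-(s k)) • x := by
        rw [hb_def, ha_def]
        simp [neg_smul]
      rw [this, norm_smul]
      simp [Real.norm_eq_abs, abs_mul]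
      ring_nf
      rw [mul_comm]
    have hlo2 : (fun k => FF p (b k) - FF p (a k) - L (b k - a k)) =o[atTop] s :=
      hlo.trans_isBigO hBO
    have hdiv : Tendsto (fun k => (FF p (b k) - FF p (a k) - L (b k - a k)) / s k)
        atTop (𝓝 0) := hlo2.tendsto_div_nhds_zero
    have htau : Tendsto (fun k => FF p (x - y (φ k)) - FF p (y (φ k))) atTop (𝓝 (-L x)) := by
      have h3 : Tendsto (fun k => (FF p (b k) - FF p (a k) - L (b k - a k)) / s k - L x)
          atTop (𝓝 (0 - L x)) := hdiv.sub_const (L x)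
      rw [zero_sub] at h3
      apply Tendsto.congr' _ h3
      filter_upwards [hev1] with k hk
      have ht0 : (0:ℝ) < FF p (y (φ k)) := lt_of_lt_of_le one_pos hk
      have hsk : s k ≠ 0 := by
        rw [hs_def]; exact inv_ne_zero ht0.ne'
      have hba : b k - a k = (-(s k)) • x := by
        rw [hb_def, ha_def]; simp [neg_smul]
      have hLba : L (b k - a k) = -(s k) * L x := by
        rw [hba, ContinuousLinearMap.map_smul, smul_eq_mul]
      rw [key (φ k) hk, hLba]
      field_simp [ht0.ne']
      have h1t : (1 / FF p (y (φ k))) = s k := by rw [hs_def, one_div]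
      have h2t : FF p (y (φ k)) * s k = 1 := by
        rw [hs_def]; exact mul_inv_cancel₀ ht0.ne'
      rw [h1t, mul_comm (s k) (FF p (y (φ k))), h2t, one_mul]
      simp only [hb_def, ha_def]
      ring
    have htau2 : Tendsto (fun k => FF p (x - y (φ k)) - FF p (y (φ k))) atTop (𝓝 (h x)) :=
      (hlim' x).comp hφmono.tendsto_atTop
    have : h x = -L x := tendsto_nhds_unique htau2 htau
    rw [this, hLx x]
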